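/- Let V be a commutative unital quantale and let f : (X,a) → (Y,b) and g : (Y,b) → (Z,c) be V-functors. Then: (1) if f and g are L-dense, so is g∘f; (2) if g∘f is L-dense, so is g; (3) if g∘f is L-dense and g is fully faithful, then f is L-dense; (4) if g∘f is fully faithful and f is L-dense, then g is fully faithful. -/

import Mathlib

open IsQuantale Quantale


/-- A V-functor `f : (X,a) → (Y,b)` is L-dense if
`b y y' = ⋁_x b y (f x) ⊗ b (f x) y'` for all `y, y'`. -/
def LDense {V : Type*} [CommMonoid V] [CompleteLattice V] [IsQuantale V]
    {X Y : Type*} (b : Y → Y → V) (f : X → Y) : Prop :=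
  ∀ y y', b y y' = ⨆ x : X, b y (f x) * b (f x) y'

/-- A V-functor `f : (X,a) → (Y,b)` is fully faithful if `a x x' = b (f x) (f x')`. -/
def FullyFaithful {V : Type*} {X Y : Type*}
    (a : X → X → V) (b : Y → Y → V) (f : X → Y) : Prop :=
  ∀ x x', a x x' = b (f x) (f x')

private lemma mul_iSup_mul {V : Type*} [CommMonoid V] [CompleteLattice V] [IsQuantale V]
    {ι : Type*} (u v : V) (s : ι → V) : u * (⨆ i, s i) * v = ⨆ i, u * s i * v := by
  rw [mul_iSup_distrib, iSup_mul_distrib]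

/-- composition-cancellation properties of L-dense and fully faithful
V-functors. -/
theorem stmt8 {V : Type*} [CommMonoid V] [CompleteLattice V] [IsQuantale V]
    {X Y Z : Type*}
    (a : X → X → V) (ha1 : ∀ x, (1 : V) ≤ a x x)
    (ha2 : ∀ x y z, a x y * a y z ≤ a x z)
    (b : Y → Y → V) (hb1 : ∀ y, (1 : V) ≤ b y y)
    (hb2 : ∀ x y z, b x y * b y z ≤ b x z)
    (c : Z → Z → V) (hc1 : ∀ z, (1 : V) ≤ c z z)
    (hc2 : ∀ x y z, c x y * c y z ≤ c x z)
    (f : X → Y) (hf : ∀ x x', a x x' ≤ b (f x) (f x'))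
    (g : Y → Z) (hg : ∀ y y', b y y' ≤ c (g y) (g y')) :
    (LDense b f → LDense c g → LDense c (g ∘ f)) ∧
    (LDense c (g ∘ f) → LDense c g) ∧
    (LDense c (g ∘ f) → FullyFaithful b c g → LDense b f) ∧
    (FullyFaithful a c (g ∘ f) → LDense b f → FullyFaithful b c g) := by
  refine ⟨?_, ?_, ?_, ?_⟩
  · -- (1)
    intro hLf hLg z z'
    refine le_antisymm ?_ (iSup_le fun x => hc2 _ _ _)
    rw [hLg z z']
    refine iSup_le fun y => ?_
    calc c z (g y) * c (g y) z'
        = c z (g y) * 1 * c (g y) z' := by rw [mul_one]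
    _ ≤ c z (g y) * b y y * c (g y) z' :=
          mul_le_mul' (mul_le_mul' le_rfl (hb1 y)) le_rfl
    _ ≤ ⨆ x, c z ((g ∘ f) x) * c ((g ∘ f) x) z' := by
          rw [hLf y y, mul_iSup_mul]
          refine iSup_le fun x => le_iSup_of_le x ?_
          calc c z (g y) * (b y (f x) * b (f x) y) * c (g y) z'
              ≤ c z (g y) * (c (g y) (g (f x)) * c (g (f x)) (g y)) * c (g y) z' :=
                mul_le_mul' (mul_le_mul' le_rfl (mul_le_mul' (hg _ _) (hg _ _))) le_rfl
          _ = (c z (g y) * c (g y) (g (f x))) * (c (g (f x)) (g y) * c (g y) z') := by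
                simp only [mul_assoc]
          _ ≤ c z ((g ∘ f) x) * c ((g ∘ f) x) z' := mul_le_mul' (hc2 _ _ _) (hc2 _ _ _)
  · -- (2)
    intro hL z z'
    refine le_antisymm ?_ (iSup_le fun y => hc2 _ _ _)
    rw [hL z z']
    exact iSup_le fun x => le_iSup_of_le (f x) le_rfl
  · -- (3)
    intro hL hFF y y'
    calc b y y' = c (g y) (g y') := hFF y y'
    _ = ⨆ x, c (g y) ((g ∘ f) x) * c ((g ∘ f) x) (g y') := hL (g y) (g y')
    _ = ⨆ x, b y (f x) * b (f x) y' := by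
          simp only [Function.comp_apply]
          exact iSup_congr fun x => by rw [← hFF, ← hFF]
  · -- (4)
    intro hFF hL y y'
    refine le_antisymm (hg _ _) ?_
    rw [hL y y']
    calc c (g y) (g y')
        = 1 * c (g y) (g y') * 1 := by rw [one_mul, mul_one]
    _ ≤ b y y * c (g y) (g y') * b y' y' :=
          mul_le_mul' (mul_le_mul' (hb1 y) le_rfl) (hb1 y')
    _ ≤ ⨆ x, b y (f x) * b (f x) y' := by
          rw [hL y y, hL y' y', iSup_mul_distrib, iSup_mul_distrib]
          refine iSup_le fun x => ?_
          rw [mul_iSup_distrib]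
          refine iSup_le fun x' => le_iSup_of_le x ?_
          have h1 : b (f x) y * c (g y) (g y') * b y' (f x') ≤ b (f x) (f x') := by
            calc b (f x) y * c (g y) (g y') * b y' (f x')
                ≤ c (g (f x)) (g y) * c (g y) (g y') * c (g y') (g (f x')) :=
                  mul_le_mul' (mul_le_mul' (hg _ _) le_rfl) (hg _ _)
            _ ≤ c (g (f x)) (g (f x')) :=
                  le_trans (mul_le_mul' (hc2 _ _ _) le_rfl) (hc2 _ _ _)
            _ = a x x' := (hFF x x').symm
            _ ≤ b (f x) (f x') := hf x x'
          calc b y (f x) * b (f x) y * c (g y) (g y') * (b y' (f x') * b (f x') y')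
              = b y (f x) * (b (f x) y * c (g y) (g y') * b y' (f x')) * b (f x') y' := by
                simp only [mul_assoc]
          _ ≤ b y (f x) * b (f x) (f x') * b (f x') y' :=
                mul_le_mul' (mul_le_mul' le_rfl h1) le_rfl
          _ ≤ b y (f x) * b (f x) y' := by
                rw [mul_assoc]
                exact mul_le_mul' le_rfl (hb2 _ _ _)
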